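/- With the same setup (v₁,v₂ isotropic, ⟨v₁,v₂⟩ = 1/2, u unit orthogonal to both; x = v₁ - v₂ + r·u, y = α v₁ - α⁻¹ v₂ + i s·u with α > 0, α ≠ 1, r,s ∈ (-1,1) nonzero; q = x - (⟨x,y⟩/|⟨x,y⟩|)·y), one has Im(⟨q,v₁⟩⟨v₂,q⟩ / ⟨v₁,v₂⟩) = r s (α² − 1) / √((α²+1)² + 4α²r²s²), which is nonzero. Consequently q does not lie on the bisector {z : Im(⟨z,v₁⟩⟨v₂,z⟩/⟨v₁,v₂⟩) = 0} determined by v₁ and v₂. -/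

import Mathlib

noncomputable def herm (x y : Fin 3 → ℂ) : ℂ :=
  -(x 0 * star (y 0)) + x 1 * star (y 1) + x 2 * star (y 2)

lemma herm_swap (a b : Fin 3 → ℂ) : herm a b = star (herm b a) := by
  simp [herm]; ring

lemma herm_add_left (a b c : Fin 3 → ℂ) : herm (a + b) c = herm a c + herm b c := by
  simp [herm]; ring

lemma herm_sub_left (a b c : Fin 3 → ℂ) : herm (a - b) c = herm a c - herm b c := by
  simp [herm]; ring

lemma herm_smul_left (t : ℂ) (a c : Fin 3 → ℂ) : herm (t • a) c = t * herm a c := by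
  simp [herm]; ring

lemma herm_add_right (a b c : Fin 3 → ℂ) : herm a (b + c) = herm a b + herm a c := by
  simp [herm]; ring

lemma herm_sub_right (a b c : Fin 3 → ℂ) : herm a (b - c) = herm a b - herm a c := by
  simp [herm]; ring

lemma herm_smul_right (t : ℂ) (a c : Fin 3 → ℂ) : herm a (t • c) = star t * herm a c := by
  simp [herm]; ring

theorem stmt_3 (v₁ v₂ u : Fin 3 → ℂ)
    (h11 : herm v₁ v₁ = 0) (h22 : herm v₂ v₂ = 0) (h12 : herm v₁ v₂ = 1 / 2)
    (huu : herm u u = 1) (hu1 : herm u v₁ = 0) (hu2 : herm u v₂ = 0)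
    (α r s : ℝ) (hα : 0 < α) (hα1 : α ≠ 1)
    (hr : r ≠ 0) (hr1 : -1 < r) (hr2 : r < 1)
    (hs : s ≠ 0) (hs1 : -1 < s) (hs2 : s < 1)
    (x y q : Fin 3 → ℂ)
    (hx : x = v₁ - v₂ + (r : ℂ) • u)
    (hy : y = (α : ℂ) • v₁ - ((α : ℂ))⁻¹ • v₂ + (Complex.I * (s : ℂ)) • u)
    (hq : q = x - (herm x y / (‖herm x y‖ : ℂ)) • y) :
    (herm q v₁ * herm v₂ q / herm v₁ v₂).im =
        r * s * (α ^ 2 - 1) / Real.sqrt ((α ^ 2 + 1) ^ 2 + 4 * α ^ 2 * r ^ 2 * s ^ 2) ∧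
      (herm q v₁ * herm v₂ q / herm v₁ v₂).im ≠ 0 := by
  have hα0 : α ≠ 0 := hα.ne'
  have hαC : (α : ℂ) ≠ 0 := by exact_mod_cast hα0
  have h21 : herm v₂ v₁ = 1 / 2 := by rw [herm_swap, h12]; simp
  have h1u : herm v₁ u = 0 := by rw [herm_swap, hu1]; simp
  have h2u : herm v₂ u = 0 := by rw [herm_swap, hu2]; simp
  have hxv1 : herm x v₁ = -(1/2) := by
    subst hx
    rw [herm_add_left, herm_sub_left, herm_smul_left, h11, h21, hu1]; ring
  have hyv1 : herm y v₁ = -((α:ℂ)⁻¹ * (1/2)) := by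
    subst hy
    rw [herm_add_left, herm_sub_left, herm_smul_left, herm_smul_left, herm_smul_left,
      h11, h21, hu1]
    ring
  have h2x : herm v₂ x = 1/2 := by
    subst hx
    rw [herm_add_right, herm_sub_right, herm_smul_right, h21, h22, h2u]
    simp
  have h2y : herm v₂ y = (α:ℂ) * (1/2) := by
    subst hy
    rw [herm_add_right, herm_sub_right, herm_smul_right, herm_smul_right, herm_smul_right,
      h21, h22, h2u]
    simp [Complex.star_def, Complex.conj_ofReal]
  set a : ℝ := -((α + α⁻¹)/2) with ha_def
  set b : ℝ := -(r*s) with hb_def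
  have hA : herm x y = (a : ℂ) + (b : ℂ) * Complex.I := by
    subst hx; subst hy
    rw [herm_add_left, herm_sub_left, herm_smul_left,
      herm_add_right, herm_add_right, herm_add_right,
      herm_sub_right, herm_sub_right, herm_sub_right,
      herm_smul_right, herm_smul_right, herm_smul_right,
      herm_smul_right, herm_smul_right, herm_smul_right,
      herm_smul_right, herm_smul_right, herm_smul_right,
      h11, h12, h21, h22, h1u, h2u, hu1, hu2, huu]
    simp [Complex.star_def, Complex.conj_ofReal, ha_def, hb_def]
    ring
  set S : ℝ := (α ^ 2 + 1) ^ 2 + 4 * α ^ 2 * r ^ 2 * s ^ 2 with hS_def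
  have hSpos : 0 < S := by positivity
  set N : ℝ := ‖herm x y‖ with hN_def
  have hre : (herm x y).re = a := by simp [hA]
  have him : (herm x y).im = b := by simp [hA]
  have hNsq : N ^ 2 = a ^ 2 + b ^ 2 := by
    rw [hN_def, Complex.sq_norm, Complex.normSq_apply, hre, him]; ring
  have hS2 : S = (2*α)^2 * (a^2 + b^2) := by
    rw [hS_def, ha_def, hb_def]; field_simp; ring
  have hNval : Real.sqrt S = 2 * α * N := by
    rw [hS2, ← hNsq]
    rw [Real.sqrt_mul (by positivity), Real.sqrt_sq (by positivity),
      Real.sqrt_sq (norm_nonneg _)]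
  have hNpos : 0 < N := by
    nlinarith [Real.sqrt_pos.mpr hSpos, hNval]
  have hNC : (N : ℂ) ≠ 0 := by exact_mod_cast hNpos.ne'
  set c : ℂ := herm x y / (N : ℂ) with hc_def
  have hcc : c * star c = 1 := by
    rw [hc_def, star_div₀, Complex.star_def, Complex.conj_ofReal, div_mul_div_comm,
      Complex.mul_conj, Complex.normSq_eq_norm_sq, ← hN_def]
    push_cast
    field_simp
  have hcim : c.im = b / N := by
    rw [hc_def, Complex.div_ofReal_im, him]
  have hq1 : herm q v₁ = -(1/2) + c * ((α:ℂ)⁻¹ * (1/2)) := by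
    subst hq
    rw [herm_sub_left, herm_smul_left, hxv1, hyv1]; ring
  have h2q : herm v₂ q = 1/2 - star c * ((α:ℂ) * (1/2)) := by
    subst hq
    rw [herm_sub_right, herm_smul_right, h2x, h2y]
  clear_value a b S N c
  clear hc_def hA hre him hN_def ha_def hS_def
  have hcc' : c * (starRingEnd ℂ) c = 1 := hcc
  have hE : herm q v₁ * herm v₂ q / herm v₁ v₂
      = -1 + ((α:ℂ)/2) * star c + c / (2*(α:ℂ)) := by
    rw [hq1, h2q, h12]
    rw [div_eq_iff (by norm_num : (1/2 : ℂ) ≠ 0)]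
    simp only [Complex.star_def]
    field_simp
    linear_combination (-(α:ℂ)) * hcc'
  have hIm : (herm q v₁ * herm v₂ q / herm v₁ v₂).im = c.im * (1 - α^2) / (2*α) := by
    rw [hE]
    simp [Complex.add_im, Complex.mul_im, Complex.div_im, Complex.normSq_apply]
    field_simp
    ring
  have key : (herm q v₁ * herm v₂ q / herm v₁ v₂).im
      = r * s * (α ^ 2 - 1) / Real.sqrt S := by
    rw [hIm, hcim, hNval, hb_def]
    have : N ≠ 0 := hNpos.ne'
    field_simp
    ring
  refine ⟨key, ?_⟩
  rw [key]
  have hα2 : α^2 ≠ 1 := by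
    intro h
    have : (α-1)*(α+1) = 0 := by nlinarith
    rcases mul_eq_zero.mp this with h1 | h1
    · exact hα1 (by linarith)
    · nlinarith
  have hnum : r * s * (α ^ 2 - 1) ≠ 0 := by
    apply mul_ne_zero (mul_ne_zero hr hs)
    exact sub_ne_zero.mpr hα2
  exact div_ne_zero hnum (Real.sqrt_pos.mpr hSpos).ne'
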